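/- Let α > 0 and let (a_t)_{t=1}^n be a sequence of non-negative real numbers satisfying a_{t+1} ≤ a_t + α a_t^{1/4} for all 1 ≤ t ≤ n−1. Then a_n ≤ ( (3α(n−1))/4 + a_1^{3/4} )^{4/3}. -/

import Mathlib

open Real

lemma key_step {b α : ℝ} (hb : 0 ≤ b) (hα : 0 < α) :
    b ^ ((4:ℝ)/3) + α * b ^ ((1:ℝ)/3) ≤ (b + 3 * α / 4) ^ ((4:ℝ)/3) := by
  rcases eq_or_lt_of_le hb with rfl | hb
  · rw [Real.zero_rpow (by norm_num), Real.zero_rpow (by norm_num)]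
    simp only [mul_zero, add_zero, zero_add]
    positivity
  · set u : ℝ := (3 * α / 4) / b with hu
    have hu0 : 0 < u := by positivity
    have h1 : b + 3 * α / 4 = b * (1 + u) := by
      rw [hu]; field_simp
    have h2 : (b * (1 + u)) ^ ((4:ℝ)/3) = b ^ ((4:ℝ)/3) * (1 + u) ^ ((4:ℝ)/3) :=
      Real.mul_rpow hb.le (by linarith)
    have hbern : 1 + (4:ℝ)/3 * u ≤ (1 + u) ^ ((4:ℝ)/3) :=
      one_add_mul_self_le_rpow_one_add (by linarith) (by norm_num)
    have h3 : b ^ ((4:ℝ)/3) * (1 + (4:ℝ)/3 * u) ≤ b ^ ((4:ℝ)/3) * (1 + u) ^ ((4:ℝ)/3) := by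
      apply mul_le_mul_of_nonneg_left hbern (by positivity)
    have h4 : b ^ ((4:ℝ)/3) = b * b ^ ((1:ℝ)/3) := by
      rw [← Real.rpow_one_add' hb.le (by norm_num)]
      norm_num
    have h5 : b ^ ((4:ℝ)/3) * ((4:ℝ)/3 * u) = α * b ^ ((1:ℝ)/3) := by
      rw [h4, hu]; field_simp
    calc b ^ ((4:ℝ)/3) + α * b ^ ((1:ℝ)/3)
        = b ^ ((4:ℝ)/3) * (1 + (4:ℝ)/3 * u) := by rw [mul_add, mul_one, h5]
      _ ≤ b ^ ((4:ℝ)/3) * (1 + u) ^ ((4:ℝ)/3) := h3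
      _ = (b + 3 * α / 4) ^ ((4:ℝ)/3) := by rw [h1, h2]

/-- Lemma 9: a discrete Grönwall-type bound for `a_{t+1} ≤ a_t + α a_t^{1/4}`. -/
theorem stmt17 (n : ℕ) (hn : 1 ≤ n) (α : ℝ) (hα : 0 < α)
    (a : ℕ → ℝ) (ha : ∀ t, 0 ≤ a t)
    (hrec : ∀ t, 1 ≤ t → t ≤ n - 1 → a (t + 1) ≤ a t + α * a t ^ ((1 : ℝ) / 4)) :
    a n ≤ (3 * α * ((n : ℝ) - 1) / 4 + a 1 ^ ((3 : ℝ) / 4)) ^ ((4 : ℝ) / 3) := by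
  suffices H : ∀ t, 1 ≤ t → t ≤ n →
      a t ≤ (3 * α * ((t : ℝ) - 1) / 4 + a 1 ^ ((3 : ℝ) / 4)) ^ ((4 : ℝ) / 3) from
    H n hn le_rfl
  intro t
  induction t with
  | zero => omega
  | succ t ih =>
    intro _ htn
    rcases Nat.eq_or_lt_of_le (Nat.one_le_iff_ne_zero.mpr (Nat.succ_ne_zero t)) with h1 | h1
    · -- t + 1 = 1
      have ht0 : t = 0 := by omega
      subst ht0
      norm_num only
      rw [mul_zero, zero_div, zero_add, ← Real.rpow_mul (ha 1)]
      norm_num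
    · -- t ≥ 1
      have ht1 : 1 ≤ t := by omega
      have htn' : t ≤ n - 1 := by omega
      set b : ℝ := 3 * α * ((t : ℝ) - 1) / 4 + a 1 ^ ((3 : ℝ) / 4) with hbdef
      have hb : 0 ≤ b := by
        have h1 : (1:ℝ) ≤ (t:ℝ) := by exact_mod_cast ht1
        have h2 : 0 ≤ 3 * α * ((t : ℝ) - 1) / 4 := by
          have : 0 ≤ (t:ℝ) - 1 := by linarith
          positivity
        have h3 := Real.rpow_nonneg (ha 1) ((3:ℝ)/4)
        simp only [hbdef]; linarith
      have hat : a t ≤ b ^ ((4:ℝ)/3) := ih ht1 (by omega)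
      have step1 : a (t + 1) ≤ a t + α * a t ^ ((1:ℝ)/4) := hrec t ht1 htn'
      have step2 : a t + α * a t ^ ((1:ℝ)/4) ≤ b ^ ((4:ℝ)/3) + α * (b ^ ((4:ℝ)/3)) ^ ((1:ℝ)/4) := by
        gcongr <;> first | exact ha t | exact hat
      have h3 : (b ^ ((4:ℝ)/3)) ^ ((1:ℝ)/4) = b ^ ((1:ℝ)/3) := by
        rw [← Real.rpow_mul hb]; norm_num
      have step3 : b ^ ((4:ℝ)/3) + α * b ^ ((1:ℝ)/3) ≤ (b + 3 * α / 4) ^ ((4:ℝ)/3) :=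
        key_step hb hα
      have hb2 : b + 3 * α / 4 = 3 * α * (((t:ℕ) + 1 : ℝ) - 1) / 4 + a 1 ^ ((3 : ℝ) / 4) := by
        simp only [hbdef]; ring
      calc a (t + 1) ≤ a t + α * a t ^ ((1:ℝ)/4) := step1
        _ ≤ b ^ ((4:ℝ)/3) + α * (b ^ ((4:ℝ)/3)) ^ ((1:ℝ)/4) := step2
        _ = b ^ ((4:ℝ)/3) + α * b ^ ((1:ℝ)/3) := by rw [h3]
        _ ≤ (b + 3 * α / 4) ^ ((4:ℝ)/3) := step3
        _ = _ := by rw [hb2]; push_cast; ring_nf
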